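/- Let A be the incidence matrix of a bipartite graph G and let I_A be its toric ideal. For any circuit c of G that has a chord in G, the circuit binomial f_c lies in the ideal generated by the circuit binomials of two shorter circuits of G obtained by splitting c along the chord. Consequently, I_A is generated by the circuit binomials of the induced (chordless) circuits of G. -/

import Mathlib

set_option autoImplicit false

open MvPolynomial

/-- A circuit of a bipartite graph whose edges `E` have endpoints `epU e ∈ U`, `epV e ∈ V`. -/
structure BipCircuit {U V E : Type*} (epU : E → U) (epV : E → V) where
  r : ℕ
  two_le : 2 ≤ r
  u : ℕ → U
  v : ℕ → V
  a : ℕ → E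
  b : ℕ → E
  haU : ∀ t < r, epU (a t) = u t
  haV : ∀ t < r, epV (a t) = v t
  hbU : ∀ t < r, epU (b t) = u ((t + 1) % r)
  hbV : ∀ t < r, epV (b t) = v t
  injU : ∀ s < r, ∀ t < r, u s = u t → s = t
  injV : ∀ s < r, ∀ t < r, v s = v t → s = t

/-- The circuit binomial `f_c = ∏ x_{a t} − ∏ x_{b t}` of a circuit `c`. -/
noncomputable def circuitBinomial {U V E : Type*} (k : Type*) [CommRing k]
    {epU : E → U} {epV : E → V} (c : BipCircuit epU epV) : MvPolynomial E k :=
  (∏ t ∈ Finset.range c.r, X (c.a t)) - ∏ t ∈ Finset.range c.r, X (c.b t)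

/-- `e` is an edge of the circuit `c`. -/
def BipCircuit.MemEdges {U V E : Type*} {epU : E → U} {epV : E → V}
    (c : BipCircuit epU epV) (e : E) : Prop :=
  ∃ t < c.r, c.a t = e ∨ c.b t = e

/-- `e` is a chord of the circuit `c` joining the non-consecutive vertices `u s` and `v t`. -/
def BipCircuit.IsChordAt {U V E : Type*} {epU : E → U} {epV : E → V}
    (c : BipCircuit epU epV) (e : E) (s t : ℕ) : Prop :=
  s < c.r ∧ t < c.r ∧ epU e = c.u s ∧ epV e = c.v t ∧ t ≠ s ∧ s ≠ (t + 1) % c.r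

/-- A circuit is induced (chordless) if it has no chord. -/
def BipCircuit.IsInduced {U V E : Type*} {epU : E → U} {epV : E → V}
    (c : BipCircuit epU epV) : Prop :=
  ¬ ∃ e s t, c.IsChordAt e s t

set_option maxHeartbeats 1000000
set_option linter.unusedSectionVars false
set_option linter.unreachableTactic false
set_option linter.unusedTactic false

lemma mod_facts {r : ℕ} (hr : 0 < r) (x : ℕ) (hx : x < 3*r) :
    x % r < r ∧ (x % r = x ∨ x % r + r = x ∨ x % r + 2*r = x) := by
  refine ⟨Nat.mod_lt _ hr, ?_⟩
  rcases Nat.lt_or_ge x r with h | h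
  · exact Or.inl (Nat.mod_eq_of_lt h)
  rcases Nat.lt_or_ge x (2*r) with h2 | h2
  · right; left
    rw [Nat.mod_eq_sub_mod h, Nat.mod_eq_of_lt (by omega)]
    omega
  · right; right
    rw [Nat.mod_eq_sub_mod h, Nat.mod_eq_sub_mod (by omega), Nat.mod_eq_of_lt (by omega)]
    omega

@[to_additive]
lemma prod_rotate'' {M : Type*} [CommMonoid M] (r : ℕ) (g : ℕ → M) (hg : g r = g 0) :
    ∏ i ∈ Finset.range r, g (i + 1) = ∏ i ∈ Finset.range r, g i := by
  cases r with
  | zero => simp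
  | succ n => rw [Finset.prod_range_succ, Finset.prod_range_succ', hg]

@[to_additive]
lemma prod_cycle'' {M : Type*} [CommMonoid M] (r c : ℕ) (f : ℕ → M) :
    ∏ i ∈ Finset.range r, f ((c + i) % r) = ∏ i ∈ Finset.range r, f i := by
  induction c with
  | zero =>
    refine Finset.prod_congr rfl fun i hi => ?_
    rw [Nat.zero_add, Nat.mod_eq_of_lt (Finset.mem_range.mp hi)]
  | succ n ih =>
    rw [← ih]
    have h1 : ∀ i ∈ Finset.range r, f ((n + 1 + i) % r) = (fun j => f ((n + j) % r)) (i + 1) := by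
      intro i _
      show f ((n + 1 + i) % r) = f ((n + (i + 1)) % r)
      congr 2
      omega
    rw [Finset.prod_congr rfl h1]
    refine prod_rotate'' r (fun j => f ((n + j) % r)) ?_
    show f ((n + r) % r) = f ((n + 0) % r)
    rw [Nat.add_mod_right, Nat.add_zero]


lemma prod_if_last {M E : Type*} [CommMonoid M] (F : E → M) (m : ℕ) (hm : 1 ≤ m)
    (x : E) (g : ℕ → E) :
    ∏ i ∈ Finset.range m, F (if i = m - 1 then x else g i)
      = (∏ j ∈ Finset.range (m-1), F (g j)) * F x := by
  obtain ⟨n, rfl⟩ : ∃ n, m = n + 1 := ⟨m-1, by omega⟩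
  rw [Nat.add_sub_cancel, Finset.prod_range_succ, if_pos rfl]
  congr 1
  refine Finset.prod_congr rfl fun i hi => ?_
  rw [if_neg (by simp at hi; omega)]

section Chord

variable {U V E : Type*} {epU : E → U} {epV : E → V}

lemma chord_split (k : Type*) [CommRing k] (c : BipCircuit epU epV) (e : E) (s t : ℕ)
    (hc : c.IsChordAt e s t) :
    ∃ c1 c2 : BipCircuit epU epV, c1.r < c.r ∧ c2.r < c.r ∧
      (∀ e', c1.MemEdges e' → c.MemEdges e' ∨ e' = e) ∧
      (∀ e', c2.MemEdges e' → c.MemEdges e' ∨ e' = e) ∧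
      circuitBinomial k c ∈ Ideal.span {circuitBinomial k c1, circuitBinomial k c2} := by
  obtain ⟨hs, ht, heU, heV, hts, hst1⟩ := hc
  have hr2 : 2 ≤ c.r := c.two_le
  set r := c.r with hrdef
  have hr0 : 0 < r := by omega
  obtain ⟨m₁, hm₁d, hm₁lt, hm₁2⟩ :
      ∃ m, (t + m = s ∨ t + m = s + r) ∧ m < r ∧ 2 ≤ m := by
    obtain ⟨h1, h2⟩ := mod_facts hr0 (t+1) (by omega)
    refine ⟨if t < s then s - t else s + r - t, ?_, ?_, ?_⟩ <;> (split_ifs <;> omega)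
  obtain ⟨m₂, hm₂d, hm₂2, hm₂lt⟩ : ∃ m, m₁ + m = r + 1 ∧ 2 ≤ m ∧ m < r :=
    ⟨r + 1 - m₁, by omega, by omega, by omega⟩
  -- circuit 1
  refine ⟨⟨m₁, hm₁2, fun i => c.u ((t+1+i)%r),
      fun i => if i = m₁-1 then c.v t else c.v ((t+1+i)%r),
      fun i => if i = m₁-1 then e else c.a ((t+1+i)%r),
      fun i => if i = m₁-1 then c.b t else c.b ((t+1+i)%r),
      ?_, ?_, ?_, ?_, ?_, ?_⟩,
    ⟨m₂, hm₂2, fun i => c.u ((s+i)%r), fun i => c.v ((s+i)%r),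
      fun i => c.a ((s+i)%r),
      fun i => if i = m₂-1 then e else c.b ((s+i)%r),
      ?_, ?_, ?_, ?_, ?_, ?_⟩,
    hm₁lt, hm₂lt, ?_, ?_, ?_⟩
  -- c1.haU
  · intro i hi
    obtain ⟨h1, h2⟩ := mod_facts hr0 (t+1+i) (by omega)
    split_ifs with h
    · rw [heU]; congr 1; omega
    · exact c.haU _ h1
  -- c1.haV
  · intro i hi
    obtain ⟨h1, h2⟩ := mod_facts hr0 (t+1+i) (by omega)
    split_ifs with h
    · exact heV
    · exact c.haV _ h1
  -- c1.hbU
  · intro i hi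
    obtain ⟨h1, h2⟩ := mod_facts hr0 (t+1+i) (by omega)
    obtain ⟨h3, h4⟩ := mod_facts (show 0 < m₁ by omega) (i+1) (by omega)
    split_ifs with h
    · rw [c.hbU t ht, ← hrdef]
      obtain ⟨h5, h6⟩ := mod_facts hr0 (t+1) (by omega)
      obtain ⟨h7, h8⟩ := mod_facts hr0 (t+1+(i+1)%m₁) (by omega)
      congr 1; omega
    · rw [c.hbU _ h1, ← hrdef]
      obtain ⟨h5, h6⟩ := mod_facts hr0 ((t+1+i)%r + 1) (by omega)
      obtain ⟨h7, h8⟩ := mod_facts hr0 (t+1+(i+1)%m₁) (by omega)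
      congr 1; omega
  -- c1.hbV
  · intro i hi
    obtain ⟨h1, h2⟩ := mod_facts hr0 (t+1+i) (by omega)
    split_ifs with h
    · exact c.hbV t ht
    · exact c.hbV _ h1
  -- c1.injU
  · intro i hi j hj hu
    obtain ⟨h1, h2⟩ := mod_facts hr0 (t+1+i) (by omega)
    obtain ⟨h3, h4⟩ := mod_facts hr0 (t+1+j) (by omega)
    have := c.injU _ h1 _ h3 hu
    omega
  -- c1.injV
  · intro i hi j hj hv
    obtain ⟨h1, h2⟩ := mod_facts hr0 (t+1+i) (by omega)
    obtain ⟨h3, h4⟩ := mod_facts hr0 (t+1+j) (by omega)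
    split_ifs at hv with hh1 hh2 hh2
    · omega
    · have := c.injV _ ht _ h3 hv; omega
    · have := c.injV _ h1 _ ht hv; omega
    · have := c.injV _ h1 _ h3 hv; omega
  -- c2.haU
  · intro i hi
    obtain ⟨h1, h2⟩ := mod_facts hr0 (s+i) (by omega)
    exact c.haU _ h1
  -- c2.haV
  · intro i hi
    obtain ⟨h1, h2⟩ := mod_facts hr0 (s+i) (by omega)
    exact c.haV _ h1
  -- c2.hbU
  · intro i hi
    obtain ⟨h1, h2⟩ := mod_facts hr0 (s+i) (by omega)
    obtain ⟨h3, h4⟩ := mod_facts (show 0 < m₂ by omega) (i+1) (by omega)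
    split_ifs with h
    · rw [heU]
      obtain ⟨h7, h8⟩ := mod_facts hr0 (s+(i+1)%m₂) (by omega)
      congr 1; omega
    · rw [c.hbU _ h1, ← hrdef]
      obtain ⟨h5, h6⟩ := mod_facts hr0 ((s+i)%r + 1) (by omega)
      obtain ⟨h7, h8⟩ := mod_facts hr0 (s+(i+1)%m₂) (by omega)
      congr 1; omega
  -- c2.hbV
  · intro i hi
    obtain ⟨h1, h2⟩ := mod_facts hr0 (s+i) (by omega)
    split_ifs with h
    · rw [heV]; congr 1; omega
    · exact c.hbV _ h1
  -- c2.injU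
  · intro i hi j hj hu
    obtain ⟨h1, h2⟩ := mod_facts hr0 (s+i) (by omega)
    obtain ⟨h3, h4⟩ := mod_facts hr0 (s+j) (by omega)
    have := c.injU _ h1 _ h3 hu
    omega
  -- c2.injV
  · intro i hi j hj hv
    obtain ⟨h1, h2⟩ := mod_facts hr0 (s+i) (by omega)
    obtain ⟨h3, h4⟩ := mod_facts hr0 (s+j) (by omega)
    have := c.injV _ h1 _ h3 hv
    omega
  -- edges of c1
  · rintro e' ⟨i, hi, hcase⟩
    try simp only at hcase hi
    obtain ⟨h1, h2⟩ := mod_facts hr0 (t+1+i) (by omega)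
    rcases hcase with hcase | hcase
    · by_cases h : i = m₁ - 1
      · rw [h, if_pos rfl] at hcase; exact Or.inr hcase.symm
      · rw [if_neg h] at hcase; exact Or.inl ⟨_, h1, Or.inl hcase⟩
    · by_cases h : i = m₁ - 1
      · rw [h, if_pos rfl] at hcase; exact Or.inl ⟨t, ht, Or.inr hcase⟩
      · rw [if_neg h] at hcase; exact Or.inl ⟨_, h1, Or.inr hcase⟩
  -- edges of c2
  · rintro e' ⟨i, hi, hcase⟩
    try simp only at hcase hi
    obtain ⟨h1, h2⟩ := mod_facts hr0 (s+i) (by omega)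
    rcases hcase with hcase | hcase
    · exact Or.inl ⟨_, h1, Or.inl hcase⟩
    · by_cases h : i = m₂ - 1
      · rw [h, if_pos rfl] at hcase; exact Or.inr hcase.symm
      · rw [if_neg h] at hcase; exact Or.inl ⟨_, h1, Or.inr hcase⟩
  -- binomial identity
  · rw [Ideal.mem_span_pair]
    refine ⟨∏ i ∈ Finset.range (m₂-1), X (c.b ((s+i)%r)),
            ∏ j ∈ Finset.range (m₁-1), X (c.a ((t+1+j)%r)), ?_⟩
    show (∏ i ∈ Finset.range (m₂-1), X (c.b ((s+i)%r)))
          * ((∏ i ∈ Finset.range m₁, X (if i = m₁-1 then e else c.a ((t+1+i)%r)))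
            - ∏ i ∈ Finset.range m₁, X (if i = m₁-1 then c.b t else c.b ((t+1+i)%r)))
       + (∏ j ∈ Finset.range (m₁-1), X (c.a ((t+1+j)%r)))
          * ((∏ i ∈ Finset.range m₂, X (c.a ((s+i)%r)))
            - ∏ i ∈ Finset.range m₂, X (if i = m₂-1 then e else c.b ((s+i)%r)))
       = (∏ j ∈ Finset.range r, X (c.a j)) - ∏ j ∈ Finset.range r, X (c.b j)
    have hf1a : (∏ i ∈ Finset.range m₁, X (if i = m₁-1 then e else c.a ((t+1+i)%r)))
        = (∏ j ∈ Finset.range (m₁-1), X (c.a ((t+1+j)%r))) * (X e : MvPolynomial E k) :=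
      prod_if_last _ _ (by omega) _ _
    have hf1b : (∏ i ∈ Finset.range m₁, X (if i = m₁-1 then c.b t else c.b ((t+1+i)%r)))
        = (∏ j ∈ Finset.range (m₁-1), X (c.b ((t+1+j)%r))) * (X (c.b t) : MvPolynomial E k) :=
      prod_if_last _ _ (by omega) _ _
    have hf2b : (∏ i ∈ Finset.range m₂, X (if i = m₂-1 then e else c.b ((s+i)%r)))
        = (∏ i ∈ Finset.range (m₂-1), X (c.b ((s+i)%r))) * (X e : MvPolynomial E k) :=
      prod_if_last _ _ (by omega) _ _
    have hA : (∏ j ∈ Finset.range r, X (c.a j) : MvPolynomial E k)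
        = (∏ i ∈ Finset.range m₂, X (c.a ((s+i)%r)))
          * ∏ j ∈ Finset.range (m₁-1), X (c.a ((t+1+j)%r)) := by
      rw [← prod_cycle'' r s (fun n => (X (c.a n) : MvPolynomial E k))]
      rw [show Finset.range r = Finset.range (m₂ + (m₁-1)) from by congr 1; omega]
      rw [Finset.prod_range_add]
      congr 1
      refine Finset.prod_congr rfl fun j hj => ?_
      have hj' := Finset.mem_range.mp hj
      congr 2
      obtain ⟨h1, h2⟩ := mod_facts hr0 (s+(m₂+j)) (by omega)
      obtain ⟨h3, h4⟩ := mod_facts hr0 (t+1+j) (by omega)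
      omega
    have hB : (∏ j ∈ Finset.range r, X (c.b j) : MvPolynomial E k)
        = (∏ i ∈ Finset.range (m₂-1), X (c.b ((s+i)%r)))
          * ((∏ j ∈ Finset.range (m₁-1), X (c.b ((t+1+j)%r))) * X (c.b t)) := by
      rw [← prod_cycle'' r s (fun n => (X (c.b n) : MvPolynomial E k))]
      rw [show Finset.range r = Finset.range ((m₂-1) + m₁) from by congr 1; omega]
      rw [Finset.prod_range_add]
      congr 1
      rw [show Finset.range m₁ = Finset.range ((m₁-1)+1) from by congr 1; omega]
      rw [Finset.prod_range_succ']
      congr 1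
      · refine Finset.prod_congr rfl fun j hj => ?_
        have hj' := Finset.mem_range.mp hj
        congr 2
        obtain ⟨h1, h2⟩ := mod_facts hr0 (s+(m₂-1+(j+1))) (by omega)
        obtain ⟨h3, h4⟩ := mod_facts hr0 (t+1+j) (by omega)
        omega
      · congr 2
        obtain ⟨h1, h2⟩ := mod_facts hr0 (s+(m₂-1+0)) (by omega)
        omega
    rw [hf1a, hf1b, hf2b, hA, hB]
    ring

end Chord


section Toric
variable {U V E : Type*} [Fintype U] [Fintype V] [Fintype E]
    [DecidableEq U] [DecidableEq V] [DecidableEq E]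
    (epU : E → U) (epV : E → V)

noncomputable def wvec (e : E) : (U ⊕ V) →₀ ℕ :=
  Finsupp.single (Sum.inl (epU e)) 1 + Finsupp.single (Sum.inr (epV e)) 1

noncomputable def Dvec : (E →₀ ℕ) →+ ((U ⊕ V) →₀ ℕ) where
  toFun := fun γ => ∑ e : E, γ e • wvec epU epV e
  map_zero' := by simp
  map_add' := by intro γ δ; simp [add_smul, Finset.sum_add_distrib]

lemma Dvec_single (e : E) : Dvec epU epV (Finsupp.single e 1) = wvec epU epV e := by
  show (∑ e' : E, (Finsupp.single e 1 : E →₀ ℕ) e' • wvec epU epV e') = wvec epU epV e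
  rw [Finset.sum_eq_single e]
  · simp
  · intro e' _ hne
    rw [Finsupp.single_apply, if_neg (fun h => hne h.symm), zero_smul]
  · intro h; exact absurd (Finset.mem_univ e) h

lemma Dvec_apply_inl (γ : E →₀ ℕ) (u : U) :
    Dvec epU epV γ (Sum.inl u) = ∑ e : E, if epU e = u then γ e else 0 := by
  show (∑ e : E, γ e • wvec epU epV e) (Sum.inl u) = _
  rw [Finsupp.finset_sum_apply]
  refine Finset.sum_congr rfl fun e _ => ?_
  simp only [wvec, Finsupp.smul_apply, Finsupp.add_apply, Finsupp.single_apply]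
  by_cases h : epU e = u <;> simp [h, Sum.inl.injEq]
lemma Dvec_apply_inr (γ : E →₀ ℕ) (v : V) :
    Dvec epU epV γ (Sum.inr v) = ∑ e : E, if epV e = v then γ e else 0 := by
  show (∑ e : E, γ e • wvec epU epV e) (Sum.inr v) = _
  rw [Finsupp.finset_sum_apply]
  refine Finset.sum_congr rfl fun e _ => ?_
  simp only [wvec, Finsupp.smul_apply, Finsupp.add_apply, Finsupp.single_apply]
  by_cases h : epV e = v <;> simp [h, Sum.inr.injEq]

variable (k : Type*) [CommRing k]

noncomputable def phiMap : MvPolynomial E k →ₐ[k] MvPolynomial (U ⊕ V) k :=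
  aeval (fun e => (X (Sum.inl (epU e)) * X (Sum.inr (epV e)) : MvPolynomial (U ⊕ V) k))

lemma phi_monomial (γ : E →₀ ℕ) (d : k) :
    phiMap epU epV k (monomial γ d) = monomial (Dvec epU epV γ) d := by
  rw [phiMap, aeval_monomial]
  have h1 : (γ.prod fun e n =>
      ((X (Sum.inl (epU e)) * X (Sum.inr (epV e)) : MvPolynomial (U ⊕ V) k)) ^ n)
      = ∏ e : E, ((X (Sum.inl (epU e)) * X (Sum.inr (epV e)) : MvPolynomial (U ⊕ V) k)) ^ γ e := by
    rw [Finsupp.prod]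
    refine Finset.prod_subset (Finset.subset_univ _) fun e _ he => ?_
    rw [Finsupp.notMem_support_iff.mp he, pow_zero]
  rw [h1]
  have h2 : ∀ e : E, ((X (Sum.inl (epU e)) * X (Sum.inr (epV e)) : MvPolynomial (U ⊕ V) k)) ^ γ e
      = monomial (γ e • wvec epU epV e) 1 := by
    intro e
    rw [mul_pow, X_pow_eq_monomial, X_pow_eq_monomial, monomial_mul, one_mul]
    congr 1
    rw [wvec, smul_add, Finsupp.smul_single, Finsupp.smul_single, smul_eq_mul, mul_one]
  rw [Finset.prod_congr rfl fun e _ => h2 e, ← monomial_sum_one]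
  show C d * monomial (Dvec epU epV γ) 1 = _
  rw [C_mul_monomial, mul_one]

end Toric

section Toric2
variable {U V E : Type*} [Fintype U] [Fintype V] [Fintype E]
    [DecidableEq U] [DecidableEq V] [DecidableEq E]
    (epU : E → U) (epV : E → V) (k : Type*) [CommRing k]

lemma phi_circuit_zero (c : BipCircuit epU epV) :
    phiMap epU epV k (circuitBinomial k c) = 0 := by
  rw [circuitBinomial, map_sub, map_prod, map_prod]
  have ha : ∀ t ∈ Finset.range c.r, phiMap epU epV k (X (c.a t))
      = X (Sum.inl (c.u t)) * X (Sum.inr (c.v t)) := by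
    intro t ht
    rw [phiMap, aeval_X, c.haU t (Finset.mem_range.mp ht), c.haV t (Finset.mem_range.mp ht)]
  have hb : ∀ t ∈ Finset.range c.r, phiMap epU epV k (X (c.b t))
      = X (Sum.inl (c.u ((t+1) % c.r))) * X (Sum.inr (c.v t)) := by
    intro t ht
    rw [phiMap, aeval_X, c.hbU t (Finset.mem_range.mp ht), c.hbV t (Finset.mem_range.mp ht)]
  rw [Finset.prod_congr rfl ha, Finset.prod_congr rfl hb,
    Finset.prod_mul_distrib, Finset.prod_mul_distrib]
  have hcyc : ∏ t ∈ Finset.range c.r, (X (Sum.inl (c.u ((t+1) % c.r))) : MvPolynomial (U ⊕ V) k)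
      = ∏ t ∈ Finset.range c.r, X (Sum.inl (c.u t)) := by
    have h1 : ∀ t ∈ Finset.range c.r,
        (X (Sum.inl (c.u ((t+1) % c.r))) : MvPolynomial (U ⊕ V) k)
        = (fun n => (X (Sum.inl (c.u n)) : MvPolynomial (U ⊕ V) k)) ((1 + t) % c.r) := by
      intro t _
      show _ = (X (Sum.inl (c.u ((1+t) % c.r))) : MvPolynomial (U ⊕ V) k)
      rw [Nat.add_comm 1 t]
    rw [Finset.prod_congr rfl h1]
    exact prod_cycle'' c.r 1 (fun n => (X (Sum.inl (c.u n)) : MvPolynomial (U ⊕ V) k))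
  rw [hcyc, sub_self]

lemma circuit_mem_Jind (c : BipCircuit epU epV) :
    circuitBinomial k c ∈
      Ideal.span {f | ∃ c' : BipCircuit epU epV, c'.IsInduced ∧ f = circuitBinomial k c'} := by
  suffices H : ∀ n, ∀ c : BipCircuit epU epV, c.r < n → circuitBinomial k c ∈
      Ideal.span {f | ∃ c' : BipCircuit epU epV, c'.IsInduced ∧ f = circuitBinomial k c'} by
    exact H (c.r + 1) c (by omega)
  intro n
  induction n with
  | zero => intro c h; omega
  | succ n ih =>
    intro c hc
    by_cases hind : c.IsInduced
    · exact Ideal.subset_span ⟨c, hind, rfl⟩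
    · obtain ⟨e, s, t, hch⟩ := not_not.mp hind
      obtain ⟨c1, c2, h1, h2, _, _, hmem⟩ := chord_split k c e s t hch
      have hle : Ideal.span {circuitBinomial k c1, circuitBinomial k c2} ≤
          Ideal.span {f | ∃ c' : BipCircuit epU epV, c'.IsInduced ∧ f = circuitBinomial k c'} := by
        rw [Ideal.span_le]
        rintro f (rfl | rfl)
        · exact ih c1 (by omega)
        · exact ih c2 (by omega)
      exact hle hmem

noncomputable def distE (α β : E →₀ ℕ) : ℕ := ∑ e : E, ((α e - β e) + (β e - α e))

lemma descent (α β : E →₀ ℕ) (cyc : BipCircuit epU epV)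
    (hA : ∀ n < cyc.r, β (cyc.a n) < α (cyc.a n))
    (hB : ∀ n < cyc.r, α (cyc.b n) < β (cyc.b n)) :
    ∃ α' : E →₀ ℕ, Dvec epU epV α' = Dvec epU epV α ∧
      distE α' β < distE α β ∧
      (monomial α 1 - monomial α' 1 : MvPolynomial E k)
        ∈ Ideal.span {circuitBinomial k cyc} := by
  classical
  set r := cyc.r with hr
  have hr2 : 2 ≤ r := cyc.two_le
  set Avec : E →₀ ℕ := ∑ n ∈ Finset.range r, Finsupp.single (cyc.a n) 1 with hAvec
  set Bvec : E →₀ ℕ := ∑ n ∈ Finset.range r, Finsupp.single (cyc.b n) 1 with hBvec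
  have hAv : ∀ e, Avec e = ∑ n ∈ Finset.range r, if cyc.a n = e then 1 else 0 := by
    intro e
    rw [hAvec, Finsupp.finset_sum_apply]
    exact Finset.sum_congr rfl fun n _ => Finsupp.single_apply
  have hBv : ∀ e, Bvec e = ∑ n ∈ Finset.range r, if cyc.b n = e then 1 else 0 := by
    intro e
    rw [hBvec, Finsupp.finset_sum_apply]
    exact Finset.sum_congr rfl fun n _ => Finsupp.single_apply
  have ha_inj : ∀ n < r, ∀ m < r, cyc.a n = cyc.a m → n = m := by
    intro n hn m hm h
    refine cyc.injU n hn m hm ?_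
    rw [← cyc.haU n hn, ← cyc.haU m hm, h]
  have hb_inj : ∀ n < r, ∀ m < r, cyc.b n = cyc.b m → n = m := by
    intro n hn m hm h
    refine cyc.injV n hn m hm ?_
    rw [← cyc.hbV n hn, ← cyc.hbV m hm, h]
  have hAle : ∀ e, Avec e ≤ 1 := by
    intro e
    rw [hAv, Finset.sum_boole]
    rw [Nat.cast_id]
    refine Finset.card_le_one.mpr fun n hn m hm => ?_
    simp only [Finset.mem_filter, Finset.mem_range] at hn hm
    exact ha_inj n hn.1 m hm.1 (hn.2.trans hm.2.symm)
  have hBle : ∀ e, Bvec e ≤ 1 := by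
    intro e
    rw [hBv, Finset.sum_boole]
    rw [Nat.cast_id]
    refine Finset.card_le_one.mpr fun n hn m hm => ?_
    simp only [Finset.mem_filter, Finset.mem_range] at hn hm
    exact hb_inj n hn.1 m hm.1 (hn.2.trans hm.2.symm)
  have hAmem : ∀ e, Avec e ≠ 0 → β e < α e := by
    intro e he
    by_contra hc
    refine he ?_
    rw [hAv]
    refine Finset.sum_eq_zero fun n hn => if_neg fun hh => ?_
    exact hc (hh ▸ hA n (Finset.mem_range.mp hn))
  have hBmem : ∀ e, Bvec e ≠ 0 → α e < β e := by
    intro e he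
    by_contra hc
    refine he ?_
    rw [hBv]
    refine Finset.sum_eq_zero fun n hn => if_neg fun hh => ?_
    exact hc (hh ▸ hB n (Finset.mem_range.mp hn))
  have hle : Avec ≤ α := by
    rw [Finsupp.le_def]
    intro e
    by_cases h : Avec e = 0
    · omega
    · have := hAmem e h
      have := hAle e
      omega
  have hcancel : α - Avec + Avec = α := tsub_add_cancel_of_le hle
  refine ⟨α - Avec + Bvec, ?_, ?_, ?_⟩
  · -- Dvec equality
    have hDAB : Dvec epU epV Avec = Dvec epU epV Bvec := by
      rw [hAvec, hBvec, map_sum, map_sum]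
      rw [Finset.sum_congr rfl fun n _ => Dvec_single epU epV (cyc.a n),
        Finset.sum_congr rfl fun n _ => Dvec_single epU epV (cyc.b n)]
      have h1 : ∀ n ∈ Finset.range r, wvec epU epV (cyc.a n)
          = Finsupp.single (Sum.inl (cyc.u n)) 1 + Finsupp.single (Sum.inr (cyc.v n)) 1 := by
        intro n hn
        rw [wvec, cyc.haU n (Finset.mem_range.mp hn), cyc.haV n (Finset.mem_range.mp hn)]
      have h2 : ∀ n ∈ Finset.range r, wvec epU epV (cyc.b n)
          = Finsupp.single (Sum.inl (cyc.u ((n+1) % r))) 1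
            + Finsupp.single (Sum.inr (cyc.v n)) 1 := by
        intro n hn
        rw [wvec, cyc.hbU n (Finset.mem_range.mp hn), cyc.hbV n (Finset.mem_range.mp hn)]
      rw [Finset.sum_congr rfl h1, Finset.sum_congr rfl h2,
        Finset.sum_add_distrib, Finset.sum_add_distrib]
      congr 1
      have h3 : ∀ n ∈ Finset.range r,
          (Finsupp.single (Sum.inl (cyc.u ((n+1) % r))) 1 : (U ⊕ V) →₀ ℕ)
          = (fun m => (Finsupp.single (Sum.inl (cyc.u m)) 1 : (U ⊕ V) →₀ ℕ)) ((1 + n) % r) := by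
        intro n _
        show _ = (Finsupp.single (Sum.inl (cyc.u ((1+n) % r))) 1 : (U ⊕ V) →₀ ℕ)
        rw [Nat.add_comm 1 n]
      rw [Finset.sum_congr rfl h3]
      exact (sum_cycle'' r 1 (fun m => (Finsupp.single (Sum.inl (cyc.u m)) 1 : (U ⊕ V) →₀ ℕ))).symm
    have h5 : Dvec epU epV (α - Avec + Bvec) + Dvec epU epV Avec
        = Dvec epU epV α + Dvec epU epV Bvec := by
      rw [← map_add, ← map_add, add_right_comm, hcancel]
    have := hDAB ▸ h5
    exact add_right_cancel (by rw [h5, hDAB])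
  · -- distance decreases
    have happ : ∀ e, (α - Avec + Bvec) e = α e - Avec e + Bvec e := by
      intro e
      rw [Finsupp.add_apply, Finsupp.tsub_apply]
    rw [distE, distE]
    refine Finset.sum_lt_sum (fun e _ => ?_) ⟨cyc.a 0, Finset.mem_univ _, ?_⟩
    · rw [happ e]
      have h1 := hAle e
      have h2 := hBle e
      by_cases h3 : Avec e = 0 <;> by_cases h4 : Bvec e = 0
      · omega
      · have := hBmem e h4; omega
      · have := hAmem e h3; omega
      · have := hAmem e h3; have := hBmem e h4; omega
    · rw [happ _]
      have h0r : 0 < r := by omega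
      have hA0 : Avec (cyc.a 0) ≠ 0 := by
        rw [hAv]
        have h := Finset.single_le_sum (f := fun n => if cyc.a n = cyc.a 0 then (1:ℕ) else 0)
          (fun n _ => by positivity) (Finset.mem_range.mpr h0r)
        rw [if_pos rfl] at h
        omega
      have hlt := hAmem _ hA0
      have hB0 : Bvec (cyc.a 0) = 0 := by
        by_contra h
        have := hBmem _ h
        omega
      have := hAle (cyc.a 0)
      rw [hB0]
      omega
  · -- membership in principal ideal
    rw [Ideal.mem_span_singleton']
    refine ⟨monomial (α - Avec) 1, ?_⟩
    have hmA : (monomial Avec 1 : MvPolynomial E k) = ∏ n ∈ Finset.range r, X (cyc.a n) := by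
      rw [hAvec, monomial_sum_one]
      exact Finset.prod_congr rfl fun n _ => by rw [← X_pow_eq_monomial, pow_one]
    have hmB : (monomial Bvec 1 : MvPolynomial E k) = ∏ n ∈ Finset.range r, X (cyc.b n) := by
      rw [hBvec, monomial_sum_one]
      exact Finset.prod_congr rfl fun n _ => by rw [← X_pow_eq_monomial, pow_one]
    rw [circuitBinomial, ← hr, ← hmA, ← hmB, mul_sub, monomial_mul, monomial_mul,
      mul_one, hcancel]

end Toric2

section Toric3
variable {U V E : Type*} [Fintype U] [Fintype V] [Fintype E]
    [DecidableEq U] [DecidableEq V] [DecidableEq E]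
    (epU : E → U) (epV : E → V) (k : Type*) [CommRing k]

lemma binom_mem_Jind (hsimple : ∀ e1 e2 : E, epU e1 = epU e2 → epV e1 = epV e2 → e1 = e2)
    (α β : E →₀ ℕ) (hD : Dvec epU epV α = Dvec epU epV β) :
    (monomial α 1 - monomial β 1 : MvPolynomial E k) ∈
      Ideal.span {f | ∃ c' : BipCircuit epU epV, c'.IsInduced ∧ f = circuitBinomial k c'} := by
  classical
  suffices H : ∀ N (α β : E →₀ ℕ), distE α β ≤ N → Dvec epU epV α = Dvec epU epV β →
      (monomial α 1 - monomial β 1 : MvPolynomial E k) ∈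
      Ideal.span {f | ∃ c' : BipCircuit epU epV, c'.IsInduced ∧ f = circuitBinomial k c'} by
    exact H (distE α β) α β le_rfl hD
  clear hD α β
  intro N
  induction N with
  | zero =>
    intro α β hd _
    have hab : α = β := by
      ext e
      have h0 := Finset.sum_eq_zero_iff.mp (Nat.le_zero.mp hd) e (Finset.mem_univ e)
      omega
    rw [hab, sub_self]
    exact zero_mem _
  | succ N ih =>
    intro α β hd hD
    by_cases hab : α = β
    · rw [hab, sub_self]; exact zero_mem _
    have hU : ∀ u : U, (∑ e : E, if epU e = u then α e else 0)
        = ∑ e : E, if epU e = u then β e else 0 := by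
      intro u
      have h := congrArg (fun f => f (Sum.inl u)) hD
      simpa [Dvec_apply_inl] using h
    have hV : ∀ v : V, (∑ e : E, if epV e = v then α e else 0)
        = ∑ e : E, if epV e = v then β e else 0 := by
      intro v
      have h := congrArg (fun f => f (Sum.inr v)) hD
      simpa [Dvec_apply_inr] using h
    have hsum : ∀ γ : E →₀ ℕ, (∑ u : U, ∑ e : E, if epU e = u then γ e else 0)
        = ∑ e : E, γ e := by
      intro γ
      rw [Finset.sum_comm]
      refine Finset.sum_congr rfl fun e _ => ?_
      simp [Finset.sum_ite_eq]
    have htot : (∑ e : E, α e) = ∑ e : E, β e := by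
      rw [← hsum α, ← hsum β]
      exact Finset.sum_congr rfl fun u _ => hU u
    have hepos : ∃ e, β e < α e := by
      by_contra h
      push_neg at h
      refine hab ?_
      ext e
      by_contra hne
      have hlt : α e < β e := lt_of_le_of_ne (h e) hne
      have := Finset.sum_lt_sum (fun e' (_ : e' ∈ (Finset.univ : Finset E)) => h e')
        ⟨e, Finset.mem_univ e, hlt⟩
      omega
    obtain ⟨e₀, he₀⟩ := hepos
    have hFex : ∀ e : E, β e < α e → ∃ e', α e' < β e' ∧ epV e' = epV e := by
      intro e he
      by_contra hcon
      push_neg at hcon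
      have hpt : ∀ e', epV e' = epV e → β e' ≤ α e' :=
        fun e' hv => not_lt.mp fun hlt => hcon e' hlt hv
      have hlt := Finset.sum_lt_sum
        (f := fun e' => if epV e' = epV e then β e' else 0)
        (g := fun e' => if epV e' = epV e then α e' else 0)
        (fun e' _ => by
          by_cases hv : epV e' = epV e
          · rw [if_pos hv, if_pos hv]; exact hpt e' hv
          · rw [if_neg hv, if_neg hv])
        ⟨e, Finset.mem_univ e, by rw [if_pos rfl, if_pos rfl]; exact he⟩
      rw [hV (epV e)] at hlt
      exact lt_irrefl _ hlt
    have hGex : ∀ e : E, α e < β e → ∃ e', β e' < α e' ∧ epU e' = epU e := by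
      intro e he
      by_contra hcon
      push_neg at hcon
      have hpt : ∀ e', epU e' = epU e → α e' ≤ β e' :=
        fun e' hv => not_lt.mp fun hlt => hcon e' hlt hv
      have hlt := Finset.sum_lt_sum
        (f := fun e' => if epU e' = epU e then α e' else 0)
        (g := fun e' => if epU e' = epU e then β e' else 0)
        (fun e' _ => by
          by_cases hv : epU e' = epU e
          · rw [if_pos hv, if_pos hv]; exact hpt e' hv
          · rw [if_neg hv, if_neg hv])
        ⟨e, Finset.mem_univ e, by rw [if_pos rfl, if_pos rfl]; exact he⟩
      rw [hU (epU e)] at hlt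
      exact lt_irrefl _ hlt
    have hFex' : ∀ e : E, ∃ e', β e < α e → α e' < β e' ∧ epV e' = epV e := by
      intro e
      by_cases he : β e < α e
      · obtain ⟨e', h'⟩ := hFex e he; exact ⟨e', fun _ => h'⟩
      · exact ⟨e, fun h => absurd h he⟩
    have hGex' : ∀ e : E, ∃ e', α e < β e → β e' < α e' ∧ epU e' = epU e := by
      intro e
      by_cases he : α e < β e
      · obtain ⟨e', h'⟩ := hGex e he; exact ⟨e', fun _ => h'⟩
      · exact ⟨e, fun h => absurd h he⟩
    choose F hFspec using hFex'
    choose G hGspec using hGex'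
    set s : ℕ → E := fun n => (fun x => G (F x))^[n] e₀ with hs
    have hs_succ : ∀ n, s (n+1) = G (F (s n)) := fun n => Function.iterate_succ_apply' _ _ _
    have hsA : ∀ n, β (s n) < α (s n) := by
      intro n
      induction n with
      | zero => exact he₀
      | succ n ihn =>
        rw [hs_succ]
        exact (hGspec _ (hFspec _ ihn).1).1
    have hsB : ∀ n, α (F (s n)) < β (F (s n)) := fun n => (hFspec _ (hsA n)).1
    have hBV : ∀ n, epV (F (s n)) = epV (s n) := fun n => (hFspec _ (hsA n)).2
    have hAU : ∀ n, epU (s (n+1)) = epU (F (s n)) := fun n => by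
      rw [hs_succ]; exact (hGspec _ (hsB n)).2
    -- finisher from an alternating circuit
    have finish : ∀ cyc : BipCircuit epU epV,
        (∀ n < cyc.r, β (cyc.a n) < α (cyc.a n)) →
        (∀ n < cyc.r, α (cyc.b n) < β (cyc.b n)) →
        (monomial α 1 - monomial β 1 : MvPolynomial E k) ∈
          Ideal.span {f | ∃ c' : BipCircuit epU epV, c'.IsInduced ∧ f = circuitBinomial k c'} := by
      intro cyc hcA hcB
      obtain ⟨α', hD', hdist, hmem⟩ := descent epU epV k α β cyc hcA hcB
      have h1 : (monomial α 1 - monomial α' 1 : MvPolynomial E k) ∈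
          Ideal.span {f | ∃ c' : BipCircuit epU epV, c'.IsInduced ∧ f = circuitBinomial k c'} := by
        refine Ideal.span_le.mpr ?_ hmem
        rw [Set.singleton_subset_iff]
        exact circuit_mem_Jind epU epV k cyc
      have h2 := ih α' β (by omega) (hD'.trans hD)
      have h3 : (monomial α 1 - monomial β 1 : MvPolynomial E k)
          = (monomial α 1 - monomial α' 1) + (monomial α' 1 - monomial β 1) := by ring
      rw [h3]
      exact add_mem h1 h2
    -- pigeonhole: find the first repeated vertex
    have hex : ∃ j, (∃ i, i < j ∧ epU (s i) = epU (s j))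
        ∨ (∃ i, i < j ∧ epV (s i) = epV (s j)) := by
      obtain ⟨n, m, hnm, h⟩ := Finite.exists_ne_map_eq_of_infinite (fun n : ℕ => epU (s n))
      rcases Nat.lt_or_ge n m with hlt | hge
      · exact ⟨m, Or.inl ⟨n, hlt, h⟩⟩
      · exact ⟨n, Or.inl ⟨m, by omega, h.symm⟩⟩
    set j := Nat.find hex with hj
    have hspec := Nat.find_spec hex
    have hmin : ∀ q, q < j → ¬((∃ i, i < q ∧ epU (s i) = epU (s q))
        ∨ (∃ i, i < q ∧ epV (s i) = epV (s q))) := fun q hq => Nat.find_min hex hq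
    by_cases hcaseU : ∃ i, i < j ∧ epU (s i) = epU (s j)
    · -- u-repeat case
      obtain ⟨i, hij, hu⟩ := hcaseU
      have h2r : 2 ≤ j - i := by
        by_contra h
        have hj1 : j = i + 1 := by omega
        have h1 : epU (s i) = epU (F (s i)) := by rw [hu, hj1]; exact hAU i
        have h2 : epV (s i) = epV (F (s i)) := (hBV i).symm
        have heq := hsimple _ _ h1 h2
        have hA' := hsA i
        have hB' := hsB i
        rw [← heq] at hB'
        omega
      have hbU : ∀ n < j - i, epU (F (s (i+n))) = epU (s (i + (n+1) % (j-i))) := by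
        intro n hn
        by_cases h : n + 1 = j - i
        · have hmod : (n+1) % (j-i) = 0 := by rw [h]; exact Nat.mod_self _
          rw [hmod, ← hAU (i+n)]
          have : i + n + 1 = j := by omega
          rw [this, Nat.add_zero]
          exact hu.symm
        · have hmod : (n+1) % (j-i) = n+1 := Nat.mod_eq_of_lt (by omega)
          rw [hmod, ← hAU (i+n)]
          congr 2 <;> omega
      have hinjU : ∀ n < j-i, ∀ m < j-i, epU (s (i+n)) = epU (s (i+m)) → n = m := by
        intro n hn m hm h
        rcases Nat.lt_trichotomy n m with hlt | heq | hlt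
        · exact absurd (Or.inl ⟨i+n, by omega, h⟩) (hmin (i+m) (by omega))
        · exact heq
        · exact absurd (Or.inl ⟨i+m, by omega, h.symm⟩) (hmin (i+n) (by omega))
      have hinjV : ∀ n < j-i, ∀ m < j-i, epV (s (i+n)) = epV (s (i+m)) → n = m := by
        intro n hn m hm h
        rcases Nat.lt_trichotomy n m with hlt | heq | hlt
        · exact absurd (Or.inr ⟨i+n, by omega, h⟩) (hmin (i+m) (by omega))
        · exact heq
        · exact absurd (Or.inr ⟨i+m, by omega, h.symm⟩) (hmin (i+n) (by omega))
      exact finish ⟨j-i, h2r, fun n => epU (s (i+n)), fun n => epV (s (i+n)),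
          fun n => s (i+n), fun n => F (s (i+n)), fun n _ => rfl, fun n _ => rfl,
          hbU, fun n _ => hBV (i+n), hinjU, hinjV⟩
        (fun n _ => hsA (i+n)) (fun n _ => hsB (i+n))
    · -- v-repeat case
      obtain ⟨i, hij, hv⟩ := hspec.resolve_left hcaseU
      have h2r : 2 ≤ j - i := by
        by_contra h
        have hj1 : j = i + 1 := by omega
        have h1 : epU (s (i+1)) = epU (F (s i)) := hAU i
        have h2 : epV (s (i+1)) = epV (F (s i)) := by
          rw [hBV i]
          rw [← hj1]
          exact hv.symm
        have heq := hsimple _ _ h1 h2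
        have hA' := hsA (i+1)
        have hB' := hsB i
        rw [heq] at hA'
        omega
      have haV : ∀ n < j-i, epV (s (i+1+n))
          = (if n = j-i-1 then epV (s i) else epV (s (i+1+n))) := by
        intro n hn
        by_cases h : n = j-i-1
        · rw [if_pos h]
          have hje : i+1+n = j := by omega
          rw [hje]
          exact hv.symm
        · rw [if_neg h]
      have hbU : ∀ n < j-i, epU (if n = j-i-1 then F (s i) else F (s (i+1+n)))
          = epU (s (i+1+(n+1) % (j-i))) := by
        intro n hn
        by_cases h : n = j-i-1
        · have hmod : (n+1) % (j-i) = 0 := by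
            rw [show n+1 = j-i by omega]
            exact Nat.mod_self _
          rw [if_pos h, hmod, ← hAU i]
        · have hmod : (n+1) % (j-i) = n+1 := Nat.mod_eq_of_lt (by omega)
          rw [if_neg h, hmod, ← hAU (i+1+n)]
          congr 2 <;> omega
      have hbV : ∀ n < j-i, epV (if n = j-i-1 then F (s i) else F (s (i+1+n)))
          = (if n = j-i-1 then epV (s i) else epV (s (i+1+n))) := by
        intro n hn
        by_cases h : n = j-i-1
        · rw [if_pos h, if_pos h]; exact hBV i
        · rw [if_neg h, if_neg h]; exact hBV (i+1+n)
      have hinjU : ∀ n < j-i, ∀ m < j-i, epU (s (i+1+n)) = epU (s (i+1+m)) → n = m := by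
        intro n hn m hm h
        rcases Nat.lt_trichotomy n m with hlt | heq | hlt
        · by_cases hmj : i+1+m = j
          · rw [hmj] at h
            exact absurd ⟨i+1+n, by omega, h⟩ hcaseU
          · exact absurd (Or.inl ⟨i+1+n, by omega, h⟩) (hmin (i+1+m) (by omega))
        · exact heq
        · by_cases hmj : i+1+n = j
          · rw [hmj] at h
            exact absurd ⟨i+1+m, by omega, h.symm⟩ hcaseU
          · exact absurd (Or.inl ⟨i+1+m, by omega, h.symm⟩) (hmin (i+1+n) (by omega))
      have hinjV : ∀ n < j-i, ∀ m < j-i,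
          (if n = j-i-1 then epV (s i) else epV (s (i+1+n)))
          = (if m = j-i-1 then epV (s i) else epV (s (i+1+m))) → n = m := by
        intro n hn m hm h
        rcases Nat.lt_trichotomy n m with hlt | heq | hlt
        · exfalso
          rw [if_neg (show n ≠ j-i-1 by omega)] at h
          by_cases hm1 : m = j-i-1
          · rw [if_pos hm1] at h
            exact hmin (i+1+n) (by omega) (Or.inr ⟨i, by omega, h.symm⟩)
          · rw [if_neg hm1] at h
            exact hmin (i+1+m) (by omega) (Or.inr ⟨i+1+n, by omega, h⟩)
        · exact heq
        · exfalso
          rw [if_neg (show m ≠ j-i-1 by omega)] at h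
          by_cases hn1 : n = j-i-1
          · rw [if_pos hn1] at h
            exact hmin (i+1+m) (by omega) (Or.inr ⟨i, by omega, h⟩)
          · rw [if_neg hn1] at h
            exact hmin (i+1+n) (by omega) (Or.inr ⟨i+1+m, by omega, h.symm⟩)
      refine finish ⟨j-i, h2r, fun n => epU (s (i+1+n)),
          fun n => if n = j-i-1 then epV (s i) else epV (s (i+1+n)),
          fun n => s (i+1+n),
          fun n => if n = j-i-1 then F (s i) else F (s (i+1+n)),
          fun n _ => rfl, haV, hbU, hbV, hinjU, hinjV⟩
        (fun n _ => hsA (i+1+n)) ?_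
      intro n hn
      dsimp only
      by_cases h : n = j-i-1
      · rw [if_pos h]; exact hsB i
      · rw [if_neg h]; exact hsB (i+1+n)

end Toric3

section Toric4
variable {U V E : Type*} [Fintype U] [Fintype V] [Fintype E]
    [DecidableEq U] [DecidableEq V] [DecidableEq E]
    (epU : E → U) (epV : E → V) (k : Type*) [CommRing k]

lemma ker_le_Jind (hsimple : ∀ e1 e2 : E, epU e1 = epU e2 → epV e1 = epV e2 → e1 = e2)
    (f : MvPolynomial E k) (hker : phiMap epU epV k f = 0) :
    f ∈ Ideal.span {g | ∃ c' : BipCircuit epU epV, c'.IsInduced ∧ g = circuitBinomial k c'} := by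
  classical
  suffices H : ∀ n (f : MvPolynomial E k), f.support.card ≤ n → phiMap epU epV k f = 0 →
      f ∈ Ideal.span {g | ∃ c' : BipCircuit epU epV, c'.IsInduced ∧ g = circuitBinomial k c'} by
    exact H _ f le_rfl hker
  clear hker f
  intro n
  induction n with
  | zero =>
    intro f hcard _
    have hf0 : f = 0 := support_eq_empty.mp (Finset.card_eq_zero.mp (Nat.le_zero.mp hcard))
    rw [hf0]
    exact zero_mem _
  | succ n ih =>
    intro f hcard hker
    by_cases hf0 : f = 0
    · rw [hf0]; exact zero_mem _
    obtain ⟨α, hα⟩ := support_nonempty.mpr hf0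
    have hφf : phiMap epU epV k f = ∑ γ ∈ f.support, monomial (Dvec epU epV γ) (coeff γ f) := by
      conv_lhs => rw [f.as_sum]
      rw [map_sum]
      exact Finset.sum_congr rfl fun γ _ => phi_monomial epU epV k γ _
    have hc0 : (∑ γ ∈ f.support,
        if Dvec epU epV γ = Dvec epU epV α then coeff γ f else 0) = 0 := by
      have h := congrArg (coeff (Dvec epU epV α)) (hφf.symm.trans hker)
      rw [coeff_zero, coeff_sum] at h
      calc (∑ γ ∈ f.support, if Dvec epU epV γ = Dvec epU epV α then coeff γ f else 0)
          = ∑ γ ∈ f.support, coeff (Dvec epU epV α) (monomial (Dvec epU epV γ) (coeff γ f)) :=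
            Finset.sum_congr rfl fun γ _ => (coeff_monomial _ _ _).symm
        _ = 0 := h
    have hβex : ∃ β ∈ f.support, β ≠ α ∧ Dvec epU epV β = Dvec epU epV α := by
      by_contra hcon
      push_neg at hcon
      have hsingle := Finset.sum_eq_single_of_mem α hα
        (fun γ hγ hne => if_neg (hcon γ hγ hne))
        (f := fun γ => if Dvec epU epV γ = Dvec epU epV α then coeff γ f else 0)
      rw [hsingle] at hc0
      rw [if_pos rfl] at hc0
      exact mem_support_iff.mp hα hc0
    obtain ⟨β, hβs, hβα, hβD⟩ := hβex
    set g := f - C (coeff α f) * (monomial α 1 - monomial β 1) with hg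
    have hgker : phiMap epU epV k g = 0 := by
      rw [hg, map_sub, hker, map_mul, map_sub, phi_monomial, phi_monomial, hβD, sub_self,
        mul_zero, sub_zero]
    have hcg : ∀ γ, coeff γ g = coeff γ f
        - coeff α f * ((if α = γ then 1 else 0) - if β = γ then 1 else 0) := by
      intro γ
      rw [hg, coeff_sub, coeff_C_mul, coeff_sub, coeff_monomial, coeff_monomial]
    have hsupp : g.support ⊆ f.support.erase α := by
      intro γ hγ
      rw [mem_support_iff] at hγ
      have hγα : γ ≠ α := by
        rintro rfl
        rw [hcg, if_pos rfl, if_neg hβα] at hγ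
        simp at hγ
      refine Finset.mem_erase.mpr ⟨hγα, mem_support_iff.mpr ?_⟩
      by_cases hγβ : β = γ
      · rw [← hγβ]; exact mem_support_iff.mp hβs
      · intro hzero
        rw [hcg, if_neg (fun h => hγα h.symm), if_neg hγβ, hzero] at hγ
        simp at hγ
    have hcard' : g.support.card ≤ n := by
      have h1 := Finset.card_le_card hsupp
      have h2 := Finset.card_erase_of_mem hα
      omega
    have hgJ := ih g hcard' hgker
    have hbin := binom_mem_Jind epU epV k hsimple α β hβD.symm
    have hfeq : f = g + C (coeff α f) * (monomial α 1 - monomial β 1) := by rw [hg]; ring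
    rw [hfeq]
    exact add_mem hgJ (Ideal.mul_mem_left _ _ hbin)

end Toric4


/-- for the toric ideal of the incidence matrix of a finite simple bipartite
graph: (1) the circuit binomial of a circuit with a chord lies in the ideal generated by the
circuit binomials of two shorter circuits obtained by splitting along the chord (their edges
being edges of `c` together with the chord); (2) consequently, the toric ideal — the kernel of
the monomial map `x_{uv} ↦ t_u t_v` — is generated by the circuit binomials of the induced
circuits. -/
theorem toric_ideal_generated_by_induced_circuit_binomials
    {U V E : Type*} [Fintype U] [Fintype V] [Fintype E]
    [DecidableEq U] [DecidableEq V] [DecidableEq E]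
    (k : Type*) [Field k] (epU : E → U) (epV : E → V)
    (hsimple : ∀ e1 e2 : E, epU e1 = epU e2 → epV e1 = epV e2 → e1 = e2) :
    (∀ (c : BipCircuit epU epV) (e : E) (s t : ℕ), c.IsChordAt e s t →
      ∃ c1 c2 : BipCircuit epU epV, c1.r < c.r ∧ c2.r < c.r ∧
        (∀ e', c1.MemEdges e' → c.MemEdges e' ∨ e' = e) ∧
        (∀ e', c2.MemEdges e' → c.MemEdges e' ∨ e' = e) ∧
        circuitBinomial k c ∈
          Ideal.span {circuitBinomial k c1, circuitBinomial k c2}) ∧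
    RingHom.ker (aeval (fun e => (X (Sum.inl (epU e)) * X (Sum.inr (epV e)) :
        MvPolynomial (U ⊕ V) k))).toRingHom
      = Ideal.span {f | ∃ c : BipCircuit epU epV, c.IsInduced ∧ f = circuitBinomial k c} := by
  constructor
  · intro c e s t hc
    exact chord_split k c e s t hc
  · apply le_antisymm
    · intro f hf
      have h0 : phiMap epU epV k f = 0 := hf
      exact ker_le_Jind epU epV k hsimple f h0
    · rw [Ideal.span_le]
      rintro f ⟨c, _, rfl⟩
      show circuitBinomial k c ∈ RingHom.ker _
      rw [RingHom.mem_ker]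
      exact phi_circuit_zero epU epV k c
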